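/- Let α > 0 and p > 1. At every point (z,σ) ∈ ℝ^N ∖ {(0,0)} with z ≠ 0 and σ ≠ 0 one has Φ(∇_z ρ) ⟨∇Φ(∇_z ρ), ∇_z[(Φ⁰(z)/ρ)^{α(p−2)}]⟩ + (Φ⁰(z)^{2α}/4) Ψ(∇_σ ρ) ⟨∇Ψ(∇_σ ρ), ∇_σ[(Φ⁰(z)/ρ)^{α(p−2)}]⟩ = 0, where ρ = ρ(z,σ). -/

import Mathlib

open Real MeasureTheory
open scoped RealInnerProductSpace

noncomputable section

abbrev Euc (n : ℕ) := EuclideanSpace ℝ (Fin n)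

/-- A Minkowski norm on `ℝⁿ`: nonnegative, absolutely homogeneous, with `N²` of class `C²`
away from the origin and strictly convex. -/
def IsMinkowskiNorm {n : ℕ} (N : Euc n → ℝ) : Prop :=
  (∀ x, 0 ≤ N x) ∧ (∀ (l : ℝ) (x : Euc n), N (l • x) = |l| * N x) ∧
  ContDiffOn ℝ 2 (fun x => (N x) ^ 2) {(0 : Euc n)}ᶜ ∧
  StrictConvexOn ℝ Set.univ (fun x => (N x) ^ 2)

/-- The Legendre transform (dual norm) `N⁰(x) = sup { ⟨x,ξ⟩ : N(ξ) = 1 }`. -/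
def dualNorm {n : ℕ} (N : Euc n → ℝ) (x : Euc n) : ℝ :=
  sSup ((fun ξ => ⟪x, ξ⟫) '' {ξ | N ξ = 1})

variable {m k : ℕ}

/-- The dual anisotropic Minkowski gauge
`ρ(z,σ) = (Φ⁰(z)^{2(α+1)} + 4(α+1)²Ψ⁰(σ)²)^{1/(2(α+1))}`. -/
def rho (α : ℝ) (Φ : Euc m → ℝ) (Ψ : Euc k → ℝ) (x : Euc m × Euc k) : ℝ :=
  (dualNorm Φ x.1 ^ (2 * (α + 1)) + 4 * (α + 1) ^ 2 * dualNorm Ψ x.2 ^ 2) ^ (1 / (2 * (α + 1)))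

/-- Gradient in the `z` variables. -/
def gradZ (u : Euc m × Euc k → ℝ) (x : Euc m × Euc k) : Euc m :=
  gradient (fun z => u (z, x.2)) x.1

/-- Gradient in the `σ` variables. -/
def gradS (u : Euc m × Euc k → ℝ) (x : Euc m × Euc k) : Euc k :=
  gradient (fun σ => u (x.1, σ)) x.2

/-- Divergence in the `z` variables. -/
def divZ (V : Euc m × Euc k → Euc m) (x : Euc m × Euc k) : ℝ :=
  ∑ i, fderiv ℝ (fun z => V (z, x.2) i) x.1 (EuclideanSpace.single i 1)

/-- Divergence in the `σ` variables. -/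
def divS (V : Euc m × Euc k → Euc k) (x : Euc m × Euc k) : ℝ :=
  ∑ i, fderiv ℝ (fun σ => V (x.1, σ) i) x.2 (EuclideanSpace.single i 1)

/-- The Finsler Laplacian in the `z` variables, `Δ_Φ(u) = div_z(Φ(∇_z u) ∇Φ(∇_z u))`. -/
def finslerLapZ (Φ : Euc m → ℝ) (u : Euc m × Euc k → ℝ) (x : Euc m × Euc k) : ℝ :=
  divZ (fun y => Φ (gradZ u y) • gradient Φ (gradZ u y)) x

/-- The Finsler Laplacian in the `σ` variables, `Δ_Ψ(u) = div_σ(Ψ(∇_σ u) ∇Ψ(∇_σ u))`. -/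
def finslerLapS (Ψ : Euc k → ℝ) (u : Euc m × Euc k → ℝ) (x : Euc m × Euc k) : ℝ :=
  divS (fun y => Ψ (gradS u y) • gradient Ψ (gradS u y)) x

/-- The operator `𝓛_{α,p}`. -/
def Lop (α p : ℝ) (Φ : Euc m → ℝ) (Ψ : Euc k → ℝ) (u : Euc m × Euc k → ℝ)
    (x : Euc m × Euc k) : ℝ :=
  divZ (fun y =>
      (Φ (gradZ u y) ^ 2 + dualNorm Φ y.1 ^ (2 * α) / 4 * Ψ (gradS u y) ^ 2) ^ ((p - 2) / 2) •
        (Φ (gradZ u y) • gradient Φ (gradZ u y))) x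
  + divS (fun y =>
      (Φ (gradZ u y) ^ 2 + dualNorm Φ y.1 ^ (2 * α) / 4 * Ψ (gradS u y) ^ 2) ^ ((p - 2) / 2) •
        ((dualNorm Φ y.1 ^ (2 * α) / 4 * Ψ (gradS u y)) • gradient Ψ (gradS u y))) x

/-- The operator `𝓛_{α,2}(u) = Δ_Φ(u) + (Φ⁰(z)^{2α}/4) Δ_Ψ(u)`. -/
def Lop2 (α : ℝ) (Φ : Euc m → ℝ) (Ψ : Euc k → ℝ) (u : Euc m × Euc k → ℝ)
    (x : Euc m × Euc k) : ℝ :=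
  finslerLapZ Φ u x + dualNorm Φ x.1 ^ (2 * α) / 4 * finslerLapS Ψ u x

namespace MinkAux

variable {n : ℕ} {N : Euc n → ℝ}

lemma zero_eq (hN : IsMinkowskiNorm N) : N 0 = 0 := by
  have := hN.2.1 0 0
  simpa using this

lemma smul_nonneg_eq (hN : IsMinkowskiNorm N) {l : ℝ} (hl : 0 ≤ l) (x : Euc n) :
    N (l • x) = l * N x := by
  rw [hN.2.1, abs_of_nonneg hl]

lemma pos (hN : IsMinkowskiNorm N) {x : Euc n} (hx : x ≠ 0) : 0 < N x := by
  have hne : x ≠ -x := by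
    intro h
    apply hx
    have h2 : (2 : ℝ) • x = 0 := by
      rw [two_smul]; nth_rewrite 1 [h]; abel
    simpa using (smul_eq_zero.1 h2).resolve_left (by norm_num)
  have hsc := hN.2.2.2
  have h := hsc.2 (Set.mem_univ x) (Set.mem_univ (-x)) hne
    (one_half_pos (α := ℝ)) (one_half_pos (α := ℝ)) (by norm_num)
  have hmid : (1/2 : ℝ) • x + (1/2 : ℝ) • (-x) = 0 := by
    rw [smul_neg]; abel
  rw [hmid] at h
  have hNx : N (-x) = N x := by
    have := hN.2.1 (-1) x; simpa using this
  simp only [smul_eq_mul] at h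
  rw [zero_eq hN, hNx] at h
  have h2 : 0 < N x ^ 2 := by nlinarith [sq_nonneg (N x)]
  rcases lt_or_eq_of_le (hN.1 x) with h' | h'
  · exact h'
  · exfalso; rw [← h'] at h2; simpa using h2

lemma continuous_sq (hN : IsMinkowskiNorm N) : Continuous (fun x => N x ^ 2) := by
  have := hN.2.2.2.convexOn.continuousOn isOpen_univ
  exact continuousOn_univ.1 this

lemma continuous (hN : IsMinkowskiNorm N) : Continuous N := by
  have : N = fun x => Real.sqrt (N x ^ 2) := by
    funext x; rw [Real.sqrt_sq (hN.1 x)]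
  rw [this]
  exact (continuous_sq hN).sqrt

lemma sq_eq (hN : IsMinkowskiNorm N) (x : Euc n) : N x = Real.sqrt (N x ^ 2) :=
  (Real.sqrt_sq (hN.1 x)).symm

lemma differentiableAt (hN : IsMinkowskiNorm N) {x : Euc n} (hx : x ≠ 0) :
    DifferentiableAt ℝ N x := by
  have h2 : DifferentiableAt ℝ (fun y => N y ^ 2) x := by
    have := (hN.2.2.1.contDiffAt (IsOpen.mem_nhds isOpen_compl_singleton hx)).differentiableAt
      (by norm_num)
    exact this
  have hne : N x ^ 2 ≠ 0 := by
    have := pos hN hx; positivity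
  have : DifferentiableAt ℝ (fun y => Real.sqrt (N y ^ 2)) x := h2.sqrt hne
  exact this.congr_of_eventuallyEq (Filter.Eventually.of_forall fun y => sq_eq hN y)

lemma hasGradientAt (hN : IsMinkowskiNorm N) {x : Euc n} (hx : x ≠ 0) :
    HasGradientAt N (gradient N x) x :=
  (differentiableAt hN hx).hasGradientAt

lemma euler (hN : IsMinkowskiNorm N) {x : Euc n} (hx : x ≠ 0) :
    ⟪gradient N x, x⟫ = N x := by
  have hF : HasFDerivAt N (InnerProductSpace.toDual ℝ (Euc n) (gradient N x)) x :=
    (hasGradientAt hN hx).hasFDerivAt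
  have hcurve : HasDerivAt (fun t : ℝ => t • x) x 1 := by
    simpa using (hasDerivAt_id (1 : ℝ)).smul_const x
  have hcomp : HasDerivAt (fun t : ℝ => N (t • x))
      (InnerProductSpace.toDual ℝ (Euc n) (gradient N x) x) 1 := by
    have := HasFDerivAt.comp_hasDerivAt (l := N) (x := (1 : ℝ)) (by simpa using hF) hcurve
    simpa [Function.comp_def] using this
  have heq : (fun t : ℝ => N (t • x)) =ᶠ[nhds (1 : ℝ)] fun t => t * N x := by
    filter_upwards [eventually_gt_nhds (zero_lt_one (α := ℝ))] with t ht
    exact smul_nonneg_eq hN ht.le x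
  have hcomp' : HasDerivAt (fun t : ℝ => t * N x)
      (InnerProductSpace.toDual ℝ (Euc n) (gradient N x) x) 1 :=
    hcomp.congr_of_eventuallyEq heq.symm
  have hlin : HasDerivAt (fun t : ℝ => t * N x) (N x) 1 := by
    simpa using (hasDerivAt_id (1 : ℝ)).mul_const (N x)
  have := hcomp'.unique hlin
  rw [InnerProductSpace.toDual_apply_apply] at this
  exact this

lemma gradient_smul_pos (hN : IsMinkowskiNorm N) {x : Euc n} (hx : x ≠ 0) {c : ℝ} (hc : 0 < c) :
    gradient N (c • x) = gradient N x := by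
  have hcx : c • x ≠ 0 := smul_ne_zero hc.ne' hx
  have h1 : HasFDerivAt N (fderiv ℝ N (c • x)) (c • x) :=
    (differentiableAt hN hcx).hasFDerivAt
  have hlin : HasFDerivAt (fun y : Euc n => c • y)
      (c • ContinuousLinearMap.id ℝ (Euc n)) x := by
    exact (c • ContinuousLinearMap.id ℝ (Euc n)).hasFDerivAt
  have hcomp : HasFDerivAt (fun y => N (c • y))
      ((fderiv ℝ N (c • x)).comp (c • ContinuousLinearMap.id ℝ (Euc n))) x :=
    HasFDerivAt.comp x h1 hlin
  have heq : (fun y => N (c • y)) = fun y => c * N y := by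
    funext y; exact smul_nonneg_eq hN hc.le y
  rw [heq] at hcomp
  have hcomp2 : HasFDerivAt (fun y => c * N y) (c • fderiv ℝ N x) x :=
    ((differentiableAt hN hx).hasFDerivAt).const_mul c
  have huniq := hcomp.unique hcomp2
  have hfd : fderiv ℝ N (c • x) = fderiv ℝ N x := by
    ext w
    have := congrArg (fun L => L w) huniq
    simp only [ContinuousLinearMap.comp_apply, ContinuousLinearMap.smul_apply,
      ContinuousLinearMap.id_apply] at this
    have hc' : c ≠ 0 := hc.ne'
    have : c * (fderiv ℝ N (c • x)) w = c * (fderiv ℝ N x) w := by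
      simpa [_root_.map_smul, smul_eq_mul] using this
    exact mul_left_cancel₀ hc' this
  unfold gradient
  rw [hfd]

lemma exists_lower_bound (hN : IsMinkowskiNorm N) (hn : 0 < n) :
    ∃ c : ℝ, 0 < c ∧ ∀ x : Euc n, c * ‖x‖ ≤ N x := by
  have hsc : IsCompact (Metric.sphere (0 : Euc n) 1) := isCompact_sphere 0 1
  have hne : (Metric.sphere (0 : Euc n) 1).Nonempty := by
    refine ⟨EuclideanSpace.single ⟨0, hn⟩ 1, ?_⟩
    simp [EuclideanSpace.norm_single]
  obtain ⟨x₀, hx₀mem, hx₀min⟩ := hsc.exists_isMinOn hne (continuous hN).continuousOn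
  have hx₀ne : x₀ ≠ 0 := by
    intro h; rw [h] at hx₀mem; simp at hx₀mem
  refine ⟨N x₀, pos hN hx₀ne, fun x => ?_⟩
  rcases eq_or_ne x 0 with rfl | hx
  · simp [zero_eq hN]
  · have hnx : (0 : ℝ) < ‖x‖ := norm_pos_iff.2 hx
    have hmem : ‖x‖⁻¹ • x ∈ Metric.sphere (0 : Euc n) 1 := by
      simp [norm_smul, abs_of_nonneg (inv_nonneg.2 hnx.le), inv_mul_cancel₀ hnx.ne']
    have hge : N x₀ ≤ N (‖x‖⁻¹ • x) := hx₀min hmem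
    have : N x = ‖x‖ * N (‖x‖⁻¹ • x) := by
      rw [← smul_nonneg_eq hN hnx.le, smul_smul, mul_inv_cancel₀ hnx.ne', one_smul]
    rw [this]
    calc N x₀ * ‖x‖ ≤ N (‖x‖⁻¹ • x) * ‖x‖ := by nlinarith
      _ = ‖x‖ * N (‖x‖⁻¹ • x) := mul_comm _ _

lemma isCompact_unitSet (hN : IsMinkowskiNorm N) (hn : 0 < n) :
    IsCompact {ξ : Euc n | N ξ = 1} := by
  obtain ⟨c, hc, hcb⟩ := exists_lower_bound hN hn
  have hclosed : IsClosed {ξ : Euc n | N ξ = 1} :=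
    isClosed_eq (continuous hN) continuous_const
  have hsub : {ξ : Euc n | N ξ = 1} ⊆ Metric.closedBall 0 (1 / c) := by
    intro ξ hξ
    simp only [Set.mem_setOf_eq] at hξ
    have := hcb ξ
    rw [hξ] at this
    rw [Metric.mem_closedBall, dist_zero_right]
    rw [le_div_iff₀ hc, mul_comm]
    exact this
  exact (isCompact_closedBall 0 (1 / c)).of_isClosed_subset hclosed hsub

lemma unitSet_nonempty (hN : IsMinkowskiNorm N) (hn : 0 < n) :
    {ξ : Euc n | N ξ = 1}.Nonempty := by
  have hxne : (EuclideanSpace.single (⟨0, hn⟩ : Fin n) (1:ℝ)) ≠ 0 := by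
    intro h
    have := congrArg (fun v => ‖v‖) h
    simpa [EuclideanSpace.norm_single] using this
  set x := EuclideanSpace.single (⟨0, hn⟩ : Fin n) (1:ℝ)
  refine ⟨(N x)⁻¹ • x, ?_⟩
  have hp := pos hN hxne
  simp only [Set.mem_setOf_eq]
  rw [smul_nonneg_eq hN (inv_nonneg.2 hp.le), inv_mul_cancel₀ hp.ne']

/-- existence of a maximizer on the unit set -/
lemma exists_max (hN : IsMinkowskiNorm N) (hn : 0 < n) (z : Euc n) :
    ∃ ξ : Euc n, N ξ = 1 ∧ ∀ w : Euc n, N w = 1 → ⟪z, w⟫ ≤ ⟪z, ξ⟫ := by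
  have hcont : Continuous fun w : Euc n => ⟪z, w⟫ := by
    exact Continuous.inner continuous_const continuous_id
  obtain ⟨ξ, hmem, hmax⟩ := (isCompact_unitSet hN hn).exists_isMaxOn (unitSet_nonempty hN hn)
    hcont.continuousOn
  exact ⟨ξ, hmem, fun w hw => hmax hw⟩

lemma dualNorm_eq_of_max (hN : IsMinkowskiNorm N) {z ξ : Euc n}
    (h1 : N ξ = 1) (h2 : ∀ w : Euc n, N w = 1 → ⟪z, w⟫ ≤ ⟪z, ξ⟫) :
    dualNorm N z = ⟪z, ξ⟫ := by
  apply IsGreatest.csSup_eq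
  constructor
  · exact ⟨ξ, h1, rfl⟩
  · rintro y ⟨w, hw, rfl⟩
    exact h2 w hw

lemma dualNorm_pos (hN : IsMinkowskiNorm N) (hn : 0 < n) {z : Euc n} (hz : z ≠ 0) :
    0 < dualNorm N z := by
  obtain ⟨ξ, h1, h2⟩ := exists_max hN hn z
  rw [dualNorm_eq_of_max hN h1 h2]
  have hp := pos hN hz
  have hmem : N ((N z)⁻¹ • z) = 1 := by
    rw [smul_nonneg_eq hN (inv_nonneg.2 hp.le), inv_mul_cancel₀ hp.ne']
  calc (0:ℝ) < (N z)⁻¹ * ‖z‖^2 := by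
        have : (0:ℝ) < ‖z‖ := norm_pos_iff.2 hz
        positivity
    _ = ⟪z, (N z)⁻¹ • z⟫ := by
        rw [real_inner_smul_right, real_inner_self_eq_norm_sq]
    _ ≤ ⟪z, ξ⟫ := h2 _ hmem

/-- uniqueness of the maximizer -/
lemma max_unique (hN : IsMinkowskiNorm N) (hn : 0 < n) {z : Euc n} (hz : z ≠ 0)
    {ξ₁ ξ₂ : Euc n}
    (h1 : N ξ₁ = 1) (hm1 : ∀ w : Euc n, N w = 1 → ⟪z, w⟫ ≤ ⟪z, ξ₁⟫)
    (h2 : N ξ₂ = 1) (hm2 : ∀ w : Euc n, N w = 1 → ⟪z, w⟫ ≤ ⟪z, ξ₂⟫) :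
    ξ₁ = ξ₂ := by
  by_contra hne
  have hv : ⟪z, ξ₁⟫ = ⟪z, ξ₂⟫ := le_antisymm (hm2 _ h1) (hm1 _ h2)
  set s := ⟪z, ξ₁⟫ with hs
  have hspos : 0 < s := by
    rw [hs, ← dualNorm_eq_of_max hN h1 hm1]
    exact dualNorm_pos hN hn hz
  set mid := (1/2 : ℝ) • ξ₁ + (1/2 : ℝ) • ξ₂ with hmid
  have hinner_mid : ⟪z, mid⟫ = s := by
    rw [hmid, inner_add_right, real_inner_smul_right, real_inner_smul_right, ← hv, ← hs]
    ring
  have hmidne : mid ≠ 0 := by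
    intro h
    rw [h, inner_zero_right] at hinner_mid
    exact hspos.ne hinner_mid
  have hsc := hN.2.2.2
  have hlt := hsc.2 (Set.mem_univ ξ₁) (Set.mem_univ ξ₂) hne
    (one_half_pos (α := ℝ)) (one_half_pos (α := ℝ)) (by norm_num)
  simp only [smul_eq_mul] at hlt
  rw [h1, h2] at hlt
  have hmidlt : N mid ^ 2 < 1 := by
    rw [hmid]
    calc N ((1/2 : ℝ) • ξ₁ + (1/2 : ℝ) • ξ₂) ^ 2 < 1/2 * 1^2 + 1/2 * 1^2 := hlt
      _ = 1 := by norm_num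
  have hmidpos := pos hN hmidne
  have hNmidlt : N mid < 1 := by nlinarith
  have hw : N ((N mid)⁻¹ • mid) = 1 := by
    rw [smul_nonneg_eq hN (inv_nonneg.2 hmidpos.le), inv_mul_cancel₀ hmidpos.ne']
  have := hm1 _ hw
  rw [real_inner_smul_right, hinner_mid] at this
  have : s < (N mid)⁻¹ * s := by
    have h1' : 1 < (N mid)⁻¹ := by
      rw [lt_inv_comm₀] <;> simp [hmidpos, hNmidlt]
    nlinarith
  linarith [hm1 _ hw, real_inner_smul_right z mid ((N mid)⁻¹)]

/-- The selected maximizer. -/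
def sel (hN : IsMinkowskiNorm N) (hn : 0 < n) (z : Euc n) : Euc n :=
  (exists_max hN hn z).choose

lemma sel_unit (hN : IsMinkowskiNorm N) (hn : 0 < n) (z : Euc n) :
    N (sel hN hn z) = 1 := (exists_max hN hn z).choose_spec.1

lemma sel_max (hN : IsMinkowskiNorm N) (hn : 0 < n) (z : Euc n) :
    ∀ w : Euc n, N w = 1 → ⟪z, w⟫ ≤ ⟪z, sel hN hn z⟫ :=
  (exists_max hN hn z).choose_spec.2

lemma dualNorm_eq_sel (hN : IsMinkowskiNorm N) (hn : 0 < n) (z : Euc n) :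
    dualNorm N z = ⟪z, sel hN hn z⟫ :=
  dualNorm_eq_of_max hN (sel_unit hN hn z) (sel_max hN hn z)

lemma exists_R (hN : IsMinkowskiNorm N) (hn : 0 < n) :
    ∃ R : ℝ, 0 ≤ R ∧ ∀ w : Euc n, N w = 1 → ‖w‖ ≤ R := by
  obtain ⟨r, hr⟩ := ((isCompact_unitSet hN hn).isBounded).subset_closedBall 0
  refine ⟨max r 0, le_max_right _ _, fun w hw => ?_⟩
  have := hr hw
  rw [Metric.mem_closedBall, dist_zero_right] at this
  exact this.trans (le_max_left _ _)

lemma continuous_dualNorm (hN : IsMinkowskiNorm N) (hn : 0 < n) :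
    Continuous (dualNorm N) := by
  obtain ⟨R, hR0, hR⟩ := exists_R hN hn
  have key : ∀ y z : Euc n, dualNorm N y - dualNorm N z ≤ R * ‖y - z‖ := by
    intro y z
    rw [dualNorm_eq_sel hN hn y, dualNorm_eq_sel hN hn z]
    have h1 : ⟪y, sel hN hn y⟫ = ⟪z, sel hN hn y⟫ + ⟪y - z, sel hN hn y⟫ := by
      rw [← inner_add_left]; norm_num
    have h2 : ⟪z, sel hN hn y⟫ ≤ ⟪z, sel hN hn z⟫ :=
      sel_max hN hn z _ (sel_unit hN hn y)
    have h3 : ⟪y - z, sel hN hn y⟫ ≤ R * ‖y - z‖ := by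
      calc ⟪y - z, sel hN hn y⟫ ≤ ‖y - z‖ * ‖sel hN hn y‖ := real_inner_le_norm _ _
        _ ≤ ‖y - z‖ * R := by
            have := hR _ (sel_unit hN hn y)
            nlinarith [norm_nonneg (y - z)]
        _ = R * ‖y - z‖ := mul_comm _ _
    linarith
  apply LipschitzWith.continuous (K := R.toNNReal)
  apply LipschitzWith.of_dist_le_mul
  intro y z
  rw [Real.dist_eq, dist_eq_norm, abs_sub_le_iff]
  have hcoe : (R.toNNReal : ℝ) = max R 0 := Real.coe_toNNReal' R
  constructor
  · calc dualNorm N y - dualNorm N z ≤ R * ‖y - z‖ := key y z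
      _ ≤ (R.toNNReal : ℝ) * ‖y - z‖ := by
          rw [hcoe]; nlinarith [norm_nonneg (y - z), le_max_left R 0]
  · calc dualNorm N z - dualNorm N y ≤ R * ‖z - y‖ := key z y
      _ = R * ‖y - z‖ := by rw [norm_sub_rev]
      _ ≤ (R.toNNReal : ℝ) * ‖y - z‖ := by
          rw [hcoe]; nlinarith [norm_nonneg (y - z), le_max_left R 0]

lemma sel_continuousAt (hN : IsMinkowskiNorm N) (hn : 0 < n) {z : Euc n} (hz : z ≠ 0) :
    ContinuousAt (sel hN hn) z := by
  rw [Metric.continuousAt_iff]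
  by_contra hcon
  push_neg at hcon
  obtain ⟨ε, hε, hcon⟩ := hcon
  have hseq : ∀ j : ℕ, ∃ y : Euc n, dist y z < 1 / (j + 1) ∧
      ε ≤ dist (sel hN hn y) (sel hN hn z) := by
    intro j
    obtain ⟨y, hy1, hy2⟩ := hcon (1 / (j + 1)) (by positivity)
    exact ⟨y, hy1, hy2⟩
  choose y hy1 hy2 using hseq
  have hyz : Filter.Tendsto y Filter.atTop (nhds z) := by
    rw [tendsto_iff_dist_tendsto_zero]
    apply squeeze_zero (fun j => dist_nonneg) (fun j => (hy1 j).le)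
    exact tendsto_one_div_add_atTop_nhds_zero_nat
  obtain ⟨a, ha, φ, hφ, hconv⟩ := (isCompact_unitSet hN hn).tendsto_subseq
    (fun j => sel_unit hN hn (y j))
  have hyφ : Filter.Tendsto (fun j => y (φ j)) Filter.atTop (nhds z) :=
    hyz.comp hφ.tendsto_atTop
  have h1 : Filter.Tendsto (fun j => ⟪y (φ j), sel hN hn (y (φ j))⟫)
      Filter.atTop (nhds ⟪z, a⟫) := hyφ.inner hconv
  have h2 : Filter.Tendsto (fun j => dualNorm N (y (φ j))) Filter.atTop
      (nhds (dualNorm N z)) :=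
    ((continuous_dualNorm hN hn).continuousAt).tendsto.comp hyφ
  have heq : (fun j => dualNorm N (y (φ j))) =
      fun j => ⟪y (φ j), sel hN hn (y (φ j))⟫ := by
    funext j; exact dualNorm_eq_sel hN hn _
  rw [heq] at h2
  have hza : ⟪z, a⟫ = dualNorm N z := tendsto_nhds_unique h1 h2
  have hamax : ∀ w : Euc n, N w = 1 → ⟪z, w⟫ ≤ ⟪z, a⟫ := by
    intro w hw
    rw [hza, dualNorm_eq_sel hN hn z]
    exact sel_max hN hn z w hw
  have haeq : a = sel hN hn z :=
    max_unique hN hn hz ha hamax (sel_unit hN hn z) (sel_max hN hn z)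
  have hdist : Filter.Tendsto (fun j => dist (sel hN hn (y (φ j))) (sel hN hn z))
      Filter.atTop (nhds 0) := by
    rw [← haeq]
    have := hconv.dist (tendsto_const_nhds (x := a) (f := Filter.atTop (α := ℕ)))
    simpa using this
  have := hdist.eventually (eventually_lt_nhds hε)
  obtain ⟨j, hj⟩ := this.exists
  exact absurd hj (not_lt.2 (hy2 (φ j)))

/-- Danskin: the dual norm has gradient equal to the maximizer. -/
lemma hasGradientAt_dualNorm (hN : IsMinkowskiNorm N) (hn : 0 < n) {z : Euc n} (hz : z ≠ 0) :
    HasGradientAt (dualNorm N) (sel hN hn z) z := by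
  rw [hasGradientAt_iff_isLittleO, Asymptotics.isLittleO_iff]
  intro c hc
  have hcont := sel_continuousAt hN hn hz
  rw [Metric.continuousAt_iff] at hcont
  obtain ⟨δ, hδ, hδc⟩ := hcont c hc
  filter_upwards [Metric.ball_mem_nhds z hδ] with y hy
  have hsel : dist (sel hN hn y) (sel hN hn z) < c := hδc (Metric.mem_ball.1 hy)
  have hlow : 0 ≤ dualNorm N y - dualNorm N z - ⟪sel hN hn z, y - z⟫ := by
    have h1 : ⟪y, sel hN hn z⟫ ≤ dualNorm N y := by
      rw [dualNorm_eq_sel hN hn y]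
      exact sel_max hN hn y _ (sel_unit hN hn z)
    have h2 : dualNorm N z = ⟪z, sel hN hn z⟫ := dualNorm_eq_sel hN hn z
    have h3 : ⟪sel hN hn z, y - z⟫ = ⟪y, sel hN hn z⟫ - ⟪z, sel hN hn z⟫ := by
      rw [real_inner_comm, inner_sub_left]
    linarith
  have hup : dualNorm N y - dualNorm N z - ⟪sel hN hn z, y - z⟫ ≤
      ‖y - z‖ * ‖sel hN hn y - sel hN hn z‖ := by
    have h1 : dualNorm N y = ⟪z, sel hN hn y⟫ + ⟪y - z, sel hN hn y⟫ := by
      rw [dualNorm_eq_sel hN hn y, ← inner_add_left]; norm_num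
    have h2 : ⟪z, sel hN hn y⟫ ≤ dualNorm N z := by
      rw [dualNorm_eq_sel hN hn z]
      exact sel_max hN hn z _ (sel_unit hN hn y)
    have h3 : ⟪sel hN hn z, y - z⟫ = ⟪y - z, sel hN hn z⟫ := real_inner_comm _ _
    have h4 : ⟪y - z, sel hN hn y⟫ - ⟪y - z, sel hN hn z⟫ =
        ⟪y - z, sel hN hn y - sel hN hn z⟫ := by rw [inner_sub_right]
    have h5 : ⟪y - z, sel hN hn y - sel hN hn z⟫ ≤
        ‖y - z‖ * ‖sel hN hn y - sel hN hn z‖ := real_inner_le_norm _ _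
    linarith
  rw [Real.norm_eq_abs, abs_of_nonneg hlow]
  calc dualNorm N y - dualNorm N z - ⟪sel hN hn z, y - z⟫
      ≤ ‖y - z‖ * ‖sel hN hn y - sel hN hn z‖ := hup
    _ ≤ ‖y - z‖ * c := by
        have : ‖sel hN hn y - sel hN hn z‖ < c := by
          rw [← dist_eq_norm]; exact hsel
        nlinarith [norm_nonneg (y - z)]
    _ = c * ‖y - z‖ := mul_comm _ _

/-- the gradient of `N` at the maximizer. -/
lemma gradient_at_sel (hN : IsMinkowskiNorm N) (hn : 0 < n) {z : Euc n} (hz : z ≠ 0) :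
    gradient N (sel hN hn z) = (dualNorm N z)⁻¹ • z := by
  set ξ := sel hN hn z with hξdef
  have hξunit : N ξ = 1 := sel_unit hN hn z
  have hξne : ξ ≠ 0 := by
    intro h; rw [h, zero_eq hN] at hξunit; norm_num at hξunit
  set s := dualNorm N z with hsdef
  have hspos : 0 < s := dualNorm_pos hN hn hz
  have hseq : s = ⟪z, ξ⟫ := dualNorm_eq_sel hN hn z
  have hkey : ∀ v : Euc n, ⟪z, v⟫ ≤ s * N v := by
    intro v
    rcases eq_or_ne v 0 with rfl | hv
    · simp [zero_eq hN]
    · have hNv := pos hN hv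
      have hw : N ((N v)⁻¹ • v) = 1 := by
        rw [smul_nonneg_eq hN (inv_nonneg.2 hNv.le), inv_mul_cancel₀ hNv.ne']
      have h := sel_max hN hn z _ hw
      rw [real_inner_smul_right] at h
      rw [← hseq] at h
      calc ⟪z, v⟫ = N v * ((N v)⁻¹ * ⟪z, v⟫) := by field_simp
        _ ≤ N v * s := by nlinarith
        _ = s * N v := mul_comm _ _
  set G : Euc n → ℝ := fun v => ⟪z, v⟫ - s * N v with hGdef
  have hGmax : IsLocalMax G ξ := by
    apply Filter.Eventually.of_forall
    intro v
    have h1 : G v ≤ 0 := by simp only [hGdef]; linarith [hkey v]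
    have h2 : G ξ = 0 := by
      simp only [hGdef, ← hseq, hξunit]; ring
    rw [h2]; exact h1
  have h1 : HasFDerivAt (fun v : Euc n => ⟪z, v⟫) (innerSL ℝ z) ξ := by
    apply HasFDerivAt.congr_of_eventuallyEq ((innerSL ℝ z).hasFDerivAt)
    exact Filter.Eventually.of_forall fun v => by simp
  have h2 : HasFDerivAt N (InnerProductSpace.toDual ℝ (Euc n) (gradient N ξ)) ξ :=
    (hasGradientAt hN hξne).hasFDerivAt
  have hG : HasFDerivAt G
      ((innerSL ℝ z) - s • (InnerProductSpace.toDual ℝ (Euc n) (gradient N ξ))) ξ :=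
    h1.sub (h2.const_mul s)
  have h0 : (innerSL ℝ z) - s • (InnerProductSpace.toDual ℝ (Euc n) (gradient N ξ)) = 0 := by
    rw [← hG.fderiv]
    exact hGmax.fderiv_eq_zero
  have hzeq : z = s • gradient N ξ := by
    apply ext_inner_right ℝ
    intro w
    have := congrArg (fun L => L w) h0
    simp only [ContinuousLinearMap.sub_apply, ContinuousLinearMap.smul_apply,
      ContinuousLinearMap.zero_apply, innerSL_apply_apply, smul_eq_mul,
      InnerProductSpace.toDual_apply_apply] at this
    rw [real_inner_smul_left]
    linarith
  rw [hzeq, inv_smul_smul₀ hspos.ne']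

/-- chain rule: gradient of scalar function composed with scalar map. -/
lemma hasGradientAt_comp_scalar {f : Euc n → ℝ} {g : Euc n} {x : Euc n}
    (hf : HasGradientAt f g x) {G : ℝ → ℝ} {G' : ℝ} (hG : HasDerivAt G G' (f x)) :
    HasGradientAt (fun y => G (f y)) (G' • g) x := by
  rw [hasGradientAt_iff_hasFDerivAt] at hf ⊢
  have h := hG.comp_hasFDerivAt x hf
  have e : InnerProductSpace.toDual ℝ (Euc n) (G' • g) =
      G' • InnerProductSpace.toDual ℝ (Euc n) g := by
    ext w
    simp only [InnerProductSpace.toDual_apply_apply, ContinuousLinearMap.smul_apply, smul_eq_mul]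
    rw [real_inner_smul_left]
  rw [e]; exact h

end MinkAux

section ScalarDerivs

lemma hasDerivAt_G (q A u : ℝ) (hq : 0 < q) (hA : 0 < A) (hu : 0 < u) :
    HasDerivAt (fun y : ℝ => (y ^ q + A) ^ (1/q))
      ((u ^ q + A) ^ (1/q - 1) * u ^ (q - 1)) u := by
  have hw : (0:ℝ) < u ^ q + A := by
    have := Real.rpow_pos_of_pos hu q; linarith
  have hinner : HasDerivAt (fun y : ℝ => y ^ q + A) (q * u ^ (q-1)) u :=
    (Real.hasDerivAt_rpow_const (Or.inl hu.ne')).add_const A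
  have houter : HasDerivAt (fun w : ℝ => w ^ (1/q)) (1/q * (u ^ q + A) ^ (1/q - 1)) (u ^ q + A) :=
    Real.hasDerivAt_rpow_const (Or.inl hw.ne')
  have h := houter.comp u hinner
  have hval : 1/q * (u ^ q + A) ^ (1/q - 1) * (q * u ^ (q-1)) =
      (u ^ q + A) ^ (1/q - 1) * u ^ (q - 1) := by
    field_simp
  rw [hval] at h
  simpa [Function.comp_def] using h

lemma hasDerivAt_H (q C b v : ℝ) (hq : 0 < q) (hC : 0 < C) (hb : 0 < b) (hv : 0 < v) :
    HasDerivAt (fun y : ℝ => (C + b * y ^ 2) ^ (1/q))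
      ((C + b * v ^ 2) ^ (1/q - 1) * (2 * b * v / q)) v := by
  have hw : (0:ℝ) < C + b * v ^ 2 := by positivity
  have hinner : HasDerivAt (fun y : ℝ => C + b * y ^ 2) (b * (2 * v)) v := by
    have h1 : HasDerivAt (fun y : ℝ => y ^ 2) ((2:ℕ) * v ^ (2-1)) v := hasDerivAt_pow 2 v
    have h2 := (h1.const_mul b).const_add C
    rw [show b * (2 * v) = b * ((2:ℕ) * v ^ (2-1)) by push_cast; ring]
    exact h2
  have houter : HasDerivAt (fun w : ℝ => w ^ (1/q)) (1/q * (C + b * v ^ 2) ^ (1/q - 1))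
      (C + b * v ^ 2) := Real.hasDerivAt_rpow_const (Or.inl hw.ne')
  have h := houter.comp v hinner
  have hval : 1/q * (C + b * v ^ 2) ^ (1/q - 1) * (b * (2 * v)) =
      (C + b * v ^ 2) ^ (1/q - 1) * (2 * b * v / q) := by ring
  rw [hval] at h
  simpa [Function.comp_def] using h

lemma hasDerivAt_F (q A β u : ℝ) (hq : 0 < q) (hA : 0 < A) (hu : 0 < u) :
    HasDerivAt (fun y : ℝ => (y / (y ^ q + A) ^ (1/q)) ^ β)
      (β * (u / (u ^ q + A) ^ (1/q)) ^ (β - 1) *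
        (((u ^ q + A) ^ (1/q) - u * ((u ^ q + A) ^ (1/q - 1) * u ^ (q - 1))) /
          ((u ^ q + A) ^ (1/q)) ^ 2)) u := by
  have hw : (0:ℝ) < u ^ q + A := by
    have := Real.rpow_pos_of_pos hu q; linarith
  have hr : (0:ℝ) < (u ^ q + A) ^ (1/q) := Real.rpow_pos_of_pos hw _
  have hbase : HasDerivAt (fun y : ℝ => y / (y ^ q + A) ^ (1/q))
      ((1 * ((u ^ q + A) ^ (1/q)) - u * ((u ^ q + A) ^ (1/q - 1) * u ^ (q - 1))) /
        ((u ^ q + A) ^ (1/q)) ^ 2) u := by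
    have h := (hasDerivAt_id u).div (hasDerivAt_G q A u hq hA hu) hr.ne'
    exact h
  have hbpos : (0:ℝ) < u / (u ^ q + A) ^ (1/q) := div_pos hu hr
  have houter : HasDerivAt (fun w : ℝ => w ^ β)
      (β * (u / (u ^ q + A) ^ (1/q)) ^ (β - 1)) (u / (u ^ q + A) ^ (1/q)) :=
    Real.hasDerivAt_rpow_const (Or.inl hbpos.ne')
  have h := houter.comp u hbase
  have hval : β * (u / (u ^ q + A) ^ (1/q)) ^ (β - 1) *
      ((1 * ((u ^ q + A) ^ (1/q)) - u * ((u ^ q + A) ^ (1/q - 1) * u ^ (q - 1))) /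
        ((u ^ q + A) ^ (1/q)) ^ 2) =
      β * (u / (u ^ q + A) ^ (1/q)) ^ (β - 1) *
      (((u ^ q + A) ^ (1/q) - u * ((u ^ q + A) ^ (1/q - 1) * u ^ (q - 1))) /
        ((u ^ q + A) ^ (1/q)) ^ 2) := by ring
  rw [hval] at h
  simpa [Function.comp_def] using h

lemma hasDerivAt_K (q C b β u v : ℝ) (hq : 0 < q) (hC : 0 < C) (hb : 0 < b)
    (hu : 0 < u) (hv : 0 < v) :
    HasDerivAt (fun y : ℝ => (u / (C + b * y ^ 2) ^ (1/q)) ^ β)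
      (β * (u / (C + b * v ^ 2) ^ (1/q)) ^ (β - 1) *
        (-(u * ((C + b * v ^ 2) ^ (1/q - 1) * (2 * b * v / q))) /
          ((C + b * v ^ 2) ^ (1/q)) ^ 2)) v := by
  have hw : (0:ℝ) < C + b * v ^ 2 := by positivity
  have hr : (0:ℝ) < (C + b * v ^ 2) ^ (1/q) := Real.rpow_pos_of_pos hw _
  have hbase : HasDerivAt (fun y : ℝ => u / (C + b * y ^ 2) ^ (1/q))
      ((0 * ((C + b * v ^ 2) ^ (1/q)) - u * ((C + b * v ^ 2) ^ (1/q - 1) * (2 * b * v / q))) /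
        ((C + b * v ^ 2) ^ (1/q)) ^ 2) v := by
    have h := (hasDerivAt_const v u).div (hasDerivAt_H q C b v hq hC hb hv) hr.ne'
    exact h
  have hbpos : (0:ℝ) < u / (C + b * v ^ 2) ^ (1/q) := div_pos hu hr
  have houter : HasDerivAt (fun w : ℝ => w ^ β)
      (β * (u / (C + b * v ^ 2) ^ (1/q)) ^ (β - 1)) (u / (C + b * v ^ 2) ^ (1/q)) :=
    Real.hasDerivAt_rpow_const (Or.inl hbpos.ne')
  have h := houter.comp v hbase
  have hval : β * (u / (C + b * v ^ 2) ^ (1/q)) ^ (β - 1) *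
      ((0 * ((C + b * v ^ 2) ^ (1/q)) - u * ((C + b * v ^ 2) ^ (1/q - 1) * (2 * b * v / q))) /
        ((C + b * v ^ 2) ^ (1/q)) ^ 2) =
      β * (u / (C + b * v ^ 2) ^ (1/q)) ^ (β - 1) *
        (-(u * ((C + b * v ^ 2) ^ (1/q - 1) * (2 * b * v / q))) /
          ((C + b * v ^ 2) ^ (1/q)) ^ 2) := by ring
  rw [hval] at h
  simpa [Function.comp_def] using h

end ScalarDerivs

/-- The cancellation identity:
`Φ(∇_z ρ)⟨∇Φ(∇_z ρ), ∇_z[(Φ⁰(z)/ρ)^{α(p−2)}]⟩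
 + (Φ⁰(z)^{2α}/4)Ψ(∇_σ ρ)⟨∇Ψ(∇_σ ρ), ∇_σ[(Φ⁰(z)/ρ)^{α(p−2)}]⟩ = 0`. -/
theorem distortion_cancellation (m k : ℕ) (hm : 1 ≤ m) (hk : 1 ≤ k)
    (α : ℝ) (hα : 0 < α) (p : ℝ) (hp : 1 < p)
    (Φ : Euc m → ℝ) (Ψ : Euc k → ℝ) (hΦ : IsMinkowskiNorm Φ) (hΨ : IsMinkowskiNorm Ψ) :
    ∀ x : Euc m × Euc k, x ≠ 0 → x.1 ≠ 0 → x.2 ≠ 0 →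
      Φ (gradZ (rho α Φ Ψ) x) *
        ⟪gradient Φ (gradZ (rho α Φ Ψ) x),
          gradZ (fun y => (dualNorm Φ y.1 / rho α Φ Ψ y) ^ (α * (p - 2))) x⟫
      + dualNorm Φ x.1 ^ (2 * α) / 4 * Ψ (gradS (rho α Φ Ψ) x) *
        ⟪gradient Ψ (gradS (rho α Φ Ψ) x),
          gradS (fun y => (dualNorm Φ y.1 / rho α Φ Ψ y) ^ (α * (p - 2))) x⟫ = 0 := by
  intro x hx hz hσ
  have hm' : 0 < m := hm
  have hk' : 0 < k := hk
  have hα1 : (0:ℝ) < α + 1 := by linarith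
  set u := dualNorm Φ x.1 with hudef
  set v := dualNorm Ψ x.2 with hvdef
  set ξ := MinkAux.sel hΦ hm' x.1 with hξdef
  set η := MinkAux.sel hΨ hk' x.2 with hηdef
  have hu : 0 < u := MinkAux.dualNorm_pos hΦ hm' hz
  have hv : 0 < v := MinkAux.dualNorm_pos hΨ hk' hσ
  set q := 2 * (α + 1) with hqdef
  have hq : 0 < q := by rw [hqdef]; linarith
  set b := (4:ℝ) * (α + 1) ^ 2 with hbdef
  have hb : (0:ℝ) < b := by rw [hbdef]; positivity
  set A := b * v ^ 2 with hAdef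
  have hA : 0 < A := by rw [hAdef]; exact mul_pos hb (pow_pos hv 2)
  set β := α * (p - 2) with hβdef
  set w₀ := u ^ q + A with hw0def
  have hupq : (0:ℝ) < u ^ q := Real.rpow_pos_of_pos hu q
  have hw0 : 0 < w₀ := by rw [hw0def]; linarith
  set r := w₀ ^ (1/q) with hrdef
  have hr : 0 < r := Real.rpow_pos_of_pos hw0 _
  set c := w₀ ^ (1/q - 1) with hcdef
  have hc : 0 < c := Real.rpow_pos_of_pos hw0 _
  set G' := c * u ^ (q - 1) with hG'def
  set H' := c * (2 * b * v / q) with hH'def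
  set F' := β * (u / r) ^ (β - 1) * ((r - u * G') / r ^ 2) with hF'def
  set K' := β * (u / r) ^ (β - 1) * (-(u * H') / r ^ 2) with hK'def
  have hG'pos : 0 < G' := by
    rw [hG'def]; exact mul_pos hc (Real.rpow_pos_of_pos hu _)
  have hH'pos : 0 < H' := by
    rw [hH'def]
    apply mul_pos hc
    apply div_pos _ hq
    positivity
  -- derivative facts
  have hGd : HasDerivAt (fun y : ℝ => (y ^ q + A) ^ (1/q)) G' u := by
    have h := hasDerivAt_G q A u hq hA hu
    rw [hG'def, hcdef, hw0def]
    exact h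
  have hHd : HasDerivAt (fun y : ℝ => (u ^ q + b * y ^ 2) ^ (1/q)) H' v := by
    have h := hasDerivAt_H q (u ^ q) b v hq hupq hb hv
    rw [hH'def, hcdef, hw0def, hAdef]
    exact h
  have hFd : HasDerivAt (fun y : ℝ => (y / (y ^ q + A) ^ (1/q)) ^ β) F' u := by
    have h := hasDerivAt_F q A β u hq hA hu
    rw [hF'def, hG'def, hcdef, hrdef, hw0def]
    exact h
  have hKd : HasDerivAt (fun y : ℝ => (u / (u ^ q + b * y ^ 2) ^ (1/q)) ^ β) K' v := by
    have h := hasDerivAt_K q (u ^ q) b β u v hq hupq hb hu hv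
    rw [hK'def, hH'def, hcdef, hrdef, hw0def, hAdef]
    exact h
  -- gradient facts for the dual norms
  have hgradU : HasGradientAt (dualNorm Φ) ξ x.1 := MinkAux.hasGradientAt_dualNorm hΦ hm' hz
  have hgradV : HasGradientAt (dualNorm Ψ) η x.2 := MinkAux.hasGradientAt_dualNorm hΨ hk' hσ
  -- the four partial gradients
  have hgz_rho : gradZ (rho α Φ Ψ) x = G' • ξ := by
    have h := MinkAux.hasGradientAt_comp_scalar hgradU hGd
    have hrfl : gradZ (rho α Φ Ψ) x = gradient (fun z' => rho α Φ Ψ (z', x.2)) x.1 := rfl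
    rw [hrfl]
    have he : (fun z' : Euc m => rho α Φ Ψ (z', x.2)) =
        fun z' => ((dualNorm Φ z') ^ q + A) ^ (1/q) := rfl
    rw [he]
    exact h.gradient
  have hgs_rho : gradS (rho α Φ Ψ) x = H' • η := by
    have h := MinkAux.hasGradientAt_comp_scalar hgradV hHd
    have hrfl : gradS (rho α Φ Ψ) x = gradient (fun σ' => rho α Φ Ψ (x.1, σ')) x.2 := rfl
    rw [hrfl]
    have he : (fun σ' : Euc k => rho α Φ Ψ (x.1, σ')) =
        fun σ' => (u ^ q + b * (dualNorm Ψ σ') ^ 2) ^ (1/q) := rfl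
    rw [he]
    exact h.gradient
  have hgz_w : gradZ (fun y => (dualNorm Φ y.1 / rho α Φ Ψ y) ^ β) x = F' • ξ := by
    have h := MinkAux.hasGradientAt_comp_scalar hgradU hFd
    have hrfl : gradZ (fun y => (dualNorm Φ y.1 / rho α Φ Ψ y) ^ β) x =
        gradient (fun z' => (dualNorm Φ z' / rho α Φ Ψ (z', x.2)) ^ β) x.1 := rfl
    rw [hrfl]
    have he : (fun z' : Euc m => (dualNorm Φ z' / rho α Φ Ψ (z', x.2)) ^ β) =
        fun z' => ((dualNorm Φ z') / ((dualNorm Φ z') ^ q + A) ^ (1/q)) ^ β := rfl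
    rw [he]
    exact h.gradient
  have hgs_w : gradS (fun y => (dualNorm Φ y.1 / rho α Φ Ψ y) ^ β) x = K' • η := by
    have h := MinkAux.hasGradientAt_comp_scalar hgradV hKd
    have hrfl : gradS (fun y => (dualNorm Φ y.1 / rho α Φ Ψ y) ^ β) x =
        gradient (fun σ' => (dualNorm Φ x.1 / rho α Φ Ψ (x.1, σ')) ^ β) x.2 := rfl
    rw [hrfl]
    have he : (fun σ' : Euc k => (dualNorm Φ x.1 / rho α Φ Ψ (x.1, σ')) ^ β) =
        fun σ' => (u / (u ^ q + b * (dualNorm Ψ σ') ^ 2) ^ (1/q)) ^ β := rfl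
    rw [he]
    exact h.gradient
  -- unit values and gradients of Φ, Ψ at the maximizers
  have hξunit : Φ ξ = 1 := MinkAux.sel_unit hΦ hm' x.1
  have hηunit : Ψ η = 1 := MinkAux.sel_unit hΨ hk' x.2
  have hξne : ξ ≠ 0 := by
    intro h; rw [h, MinkAux.zero_eq hΦ] at hξunit; norm_num at hξunit
  have hηne : η ≠ 0 := by
    intro h; rw [h, MinkAux.zero_eq hΨ] at hηunit; norm_num at hηunit
  have hΦval : Φ (G' • ξ) = G' := by
    rw [MinkAux.smul_nonneg_eq hΦ hG'pos.le, hξunit, mul_one]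
  have hΨval : Ψ (H' • η) = H' := by
    rw [MinkAux.smul_nonneg_eq hΨ hH'pos.le, hηunit, mul_one]
  have hgradΦ : gradient Φ (G' • ξ) = u⁻¹ • x.1 := by
    rw [MinkAux.gradient_smul_pos hΦ hξne hG'pos]
    exact MinkAux.gradient_at_sel hΦ hm' hz
  have hgradΨ : gradient Ψ (H' • η) = v⁻¹ • x.2 := by
    rw [MinkAux.gradient_smul_pos hΨ hηne hH'pos]
    exact MinkAux.gradient_at_sel hΨ hk' hσ
  have hxξ : ⟪x.1, ξ⟫ = u := (MinkAux.dualNorm_eq_sel hΦ hm' x.1).symm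
  have hxη : ⟪x.2, η⟫ = v := (MinkAux.dualNorm_eq_sel hΨ hk' x.2).symm
  -- rewrite the goal
  rw [hgz_rho, hgs_rho, hgz_w, hgs_w, hΦval, hΨval, hgradΦ, hgradΨ]
  rw [real_inner_smul_left, real_inner_smul_right, hxξ]
  rw [real_inner_smul_left, real_inner_smul_right, hxη]
  have hsimp1 : u⁻¹ * (F' * u) = F' := by field_simp
  have hsimp2 : v⁻¹ * (K' * v) = K' := by field_simp
  -- the key scalar cancellation
  have e1 : u ^ (q - 1) = u ^ (2*α) * u := by
    rw [show q - 1 = 2*α + 1 by rw [hqdef]; ring]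
    rw [Real.rpow_add_one hu.ne']
  have e2 : q ^ 2 * v ^ 2 = w₀ - u ^ (2*α) * u * u := by
    have f2 : u ^ q = u ^ (2*α) * u * u := by
      rw [show q = 2*α + 1 + 1 by rw [hqdef]; ring]
      rw [Real.rpow_add_one hu.ne', Real.rpow_add_one hu.ne']
    have f4 : b * v ^ 2 = w₀ - u ^ q := by rw [hw0def, hAdef]; ring
    rw [← f2, ← f4, hbdef, hqdef]; ring
  have e3 : r = c * w₀ := by
    have h := Real.rpow_add_one hw0.ne' (1/q - 1)
    rw [show 1/q - 1 + 1 = 1/q by ring] at h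
    rw [hrdef, hcdef, h]
  have hH2 : 2 * b * v / q = 2 * q * v := by
    rw [hbdef, hqdef]
    field_simp
    ring
  have hbr : G' * (r - u * G') = u ^ (2*α) / 4 * (u * H' ^ 2) := by
    rw [hG'def, hH'def, hH2, e1, e3]
    linear_combination (-(c^2 * u ^ (2*α) * u)) * e2
  calc G' * (u⁻¹ * (F' * u)) + u ^ (2*α) / 4 * H' * (v⁻¹ * (K' * v))
      = G' * F' + u ^ (2*α) / 4 * H' * K' := by rw [hsimp1, hsimp2]
    _ = 0 := by
        rw [hF'def, hK'def]
        have expand : G' * (β * (u / r) ^ (β - 1) * ((r - u * G') / r ^ 2)) +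
            u ^ (2*α) / 4 * H' * (β * (u / r) ^ (β - 1) * (-(u * H') / r ^ 2)) =
            (β * (u / r) ^ (β - 1) / r ^ 2) *
              (G' * (r - u * G') - u ^ (2*α) / 4 * (u * H' ^ 2)) := by ring
        rw [expand, hbr]
        ring
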